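/- For a geometric chain of ideals 𝓘 = (I₁,…,I_k) in the root poset of Φ and α ∈ Φ⁺ with r_α(𝓘) = r ≤ k, one has α ∈ I_r. -/

import Mathlib

open scoped Pointwise RealInnerProductSpace

/-- A crystallographic root system together with a choice of simple system. -/
structure RootSystemData (V : Type*) [NormedAddCommGroup V] [InnerProductSpace ℝ V] where
  Φ : Set V
  S : Set V
  finite : Φ.Finite
  ne_zero : ∀ α ∈ Φ, α ≠ 0
  reflect_mem : ∀ α ∈ Φ, ∀ β ∈ Φ, β - (2 * (inner ℝ β α : ℝ) / (inner ℝ α α : ℝ)) • α ∈ Φ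
  crystal : ∀ α ∈ Φ, ∀ β ∈ Φ, ∃ m : ℤ, 2 * (inner ℝ β α : ℝ) / (inner ℝ α α : ℝ) = (m : ℝ)
  reduced : ∀ α ∈ Φ, ∀ t : ℝ, t • α ∈ Φ → t = 1 ∨ t = -1
  S_sub : S ⊆ Φ
  S_indep : LinearIndependent ℝ ((↑) : S → V)
  decomp : ∀ α ∈ Φ, α ∈ AddSubmonoid.closure S ∨ -α ∈ AddSubmonoid.closure S

namespace RootSystemData

variable {V : Type*} [NormedAddCommGroup V] [InnerProductSpace ℝ V] (D : RootSystemData V)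

/-- The positive roots. -/
def pos : Set V := {α ∈ D.Φ | α ∈ AddSubmonoid.closure D.S}

/-- The root poset order: `α ≤ β` iff `β - α` is a nonnegative integer combination
of simple roots. -/
def rle (α β : V) : Prop := β - α ∈ AddSubmonoid.closure D.S

/-- An (order) ideal of the root poset. -/
def IsIdeal (I : Set V) : Prop :=
  I ⊆ D.pos ∧ ∀ α ∈ I, ∀ β ∈ D.pos, D.rle β α → β ∈ I

/-- The order filters complementary to a chain of ideals, with the conventions
`J 0 = Φ⁺` (as `I 0 = ∅`) and `J i = J k` for `i > k`. -/
def Jf (k : ℕ) (I : ℕ → Set V) (i : ℕ) : Set V := D.pos \ I (min i k)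

/-- A geometric chain of `k` ideals in the root poset. -/
structure IsGeomChain (k : ℕ) (I : ℕ → Set V) : Prop where
  zero : I 0 = ∅
  ideal : ∀ i, 1 ≤ i → i ≤ k → D.IsIdeal (I i)
  mono : ∀ i j, i ≤ j → j ≤ k → I i ⊆ I j
  geomI : ∀ i j, i + j ≤ k → (I i + I j) ∩ D.pos ⊆ I (i + j)
  geomJ : ∀ i j, (D.Jf k I i + D.Jf k I j) ∩ D.pos ⊆ D.Jf k I (i + j)

/-- A chain of ideals is positive if `S ⊆ I k`. -/
def IsPositiveChain (k : ℕ) (I : ℕ → Set V) : Prop := D.S ⊆ I k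

/-- The set of values `r₁ + … + r_m` over all expressions `α = α₁ + … + α_m` with
`α_i ∈ I (r i)` and `1 ≤ r i ≤ k`; its least element (when it exists) is `r_α(𝓘)`. -/
def rVals (_D : RootSystemData V) (k : ℕ) (I : ℕ → Set V) (α : V) : Set ℕ :=
  {N | ∃ m : ℕ, ∃ a : Fin m → V, ∃ r : Fin m → ℕ,
    (∀ i, 1 ≤ r i ∧ r i ≤ k ∧ a i ∈ I (r i)) ∧ (∑ i, a i) = α ∧ (∑ i, r i) = N}

/-- The extension `𝓘̲` of a geometric chain of `k` ideals to a chain of `k+1` ideals,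
with `I̲_{k+1} = ⋃_{i+j=k+1} ((I_i + I_j) ∩ Φ⁺) ∪ I_k ∪ S`. -/
def Ibar (k : ℕ) (I : ℕ → Set V) : ℕ → Set V := fun i =>
  if i ≤ k then I i
  else (⋃ (p : ℕ × ℕ) (_ : p.1 + p.2 = k + 1), (I p.1 + I p.2) ∩ D.pos) ∪ I k ∪ D.S

/-- `α` is a rank `r` indecomposable element of the chain of ideals `I`. -/
def IsIndec (k : ℕ) (I : ℕ → Set V) (r : ℕ) (α : V) : Prop :=
  α ∈ I r ∧ IsLeast (D.rVals k I α) r ∧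
  (∀ i j, i + j = r → α ∉ I i + I j) ∧
  (∀ β ∈ D.pos, ∀ t, t ≤ k → IsLeast (D.rVals k I (α + β)) t → β ∈ I (t - r))

/-- The complement of the `k`-Catalan arrangement of `Φ`. -/
def catComp (k : ℕ) : Set V :=
  {x | ∀ α ∈ D.Φ, ∀ r : ℕ, r ≤ k → (inner ℝ x α : ℝ) ≠ (r : ℝ)}

/-- A region of the `k`-Catalan arrangement: a connected component of the complement. -/
def IsRegion (k : ℕ) (R : Set V) : Prop :=
  ∃ x ∈ D.catComp k, R = connectedComponentIn (D.catComp k) x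

/-- A dominant region of the `k`-Catalan arrangement. -/
def IsDomRegion (k : ℕ) (R : Set V) : Prop :=
  D.IsRegion k R ∧ ∀ x ∈ R, ∀ α ∈ D.pos, 0 < (inner ℝ x α : ℝ)

/-- The complement of the affine Coxeter arrangement of `Φ`. -/
def affComp : Set V := {x | ∀ α ∈ D.Φ, ∀ r : ℤ, (inner ℝ x α : ℝ) ≠ (r : ℝ)}

/-- An alcove: a connected component of the complement of the affine Coxeter arrangement. -/
def IsAlcove (A : Set V) : Prop :=
  ∃ x ∈ D.affComp, A = connectedComponentIn D.affComp x

/-- The hyperplane `H_α^r` supports a facet of `R`. -/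
def IsWall (_D : RootSystemData V) (R : Set V) (α : V) (r : ℝ) : Prop :=
  ∃ x, (inner ℝ x α : ℝ) = r ∧ ∃ ε > 0, ∀ y, (inner ℝ y α : ℝ) = r → dist y x < ε → y ∈ closure R

/-- `H_α^r` is a ceiling of the dominant region (or alcove) `R`: a wall not through
the origin with `R` on the same side as the origin. -/
def IsCeiling (R : Set V) (α : V) (r : ℝ) : Prop :=
  D.IsWall R α r ∧ 0 < r ∧ ∀ x ∈ R, (inner ℝ x α : ℝ) < r

/-- `H_α^r` is a floor of the dominant region (or alcove) `R`: a wall not through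
the origin separating `R` from the origin. -/
def IsFloor (R : Set V) (α : V) (r : ℝ) : Prop :=
  D.IsWall R α r ∧ 0 < r ∧ ∀ x ∈ R, r < (inner ℝ x α : ℝ)

/-- The chain of ideals `θ(R)` associated to a dominant region `R`. -/
def theta (R : Set V) : ℕ → Set V := fun i =>
  {α ∈ D.pos | ∀ x ∈ R, (inner ℝ x α : ℝ) < (i : ℝ)}

/-- `B` is the maximal alcove of the (bounded) region corresponding to the positive chain
of ideals `I`, i.e. the alcove with `r(B,α) = r_α(𝓘)` for all positive roots `α`. -/
def IsMaxAlcoveOf (k : ℕ) (I : ℕ → Set V) (B : Set V) : Prop :=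
  D.IsAlcove B ∧ ∀ α ∈ D.pos, ∃ r : ℕ, IsLeast (D.rVals k I α) r ∧
    ∀ x ∈ B, ((r : ℝ) - 1 < (inner ℝ x α : ℝ) ∧ (inner ℝ x α : ℝ) < (r : ℝ))

/-- The root system `Φ` is irreducible. -/
def Irred : Prop :=
  ∀ Φ₁ Φ₂ : Set V, Φ₁ ∪ Φ₂ = D.Φ → (∀ a ∈ Φ₁, ∀ b ∈ Φ₂, (inner ℝ a b : ℝ) = 0) →
    Φ₁ = ∅ ∨ Φ₂ = ∅

end RootSystemData

section Aux

variable {V : Type*} [NormedAddCommGroup V] [InnerProductSpace ℝ V] (D : RootSystemData V)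

lemma aux_inner_self_pos {α : V} (hα : α ∈ D.Φ) : 0 < (inner ℝ α α : ℝ) :=
  lt_of_le_of_ne real_inner_self_nonneg
    (Ne.symm (inner_self_ne_zero.2 (D.ne_zero α hα)))

lemma aux_neg_mem {α : V} (hα : α ∈ D.Φ) : -α ∈ D.Φ := by
  have h2 : 2 * (inner ℝ α α : ℝ) / (inner ℝ α α : ℝ) = 2 := by
    rw [mul_div_assoc, div_self (ne_of_gt (aux_inner_self_pos D hα)), mul_one]
  have hm := D.reflect_mem α hα α hα
  rw [h2] at hm
  have : α - (2:ℝ) • α = -α := by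
    rw [two_smul]; abel
  rwa [this] at hm

lemma aux_sub_mem {α β : V} (hα : α ∈ D.Φ) (hβ : β ∈ D.Φ) (hne : α ≠ β)
    (hpos : 0 < (inner ℝ α β : ℝ)) : α - β ∈ D.Φ := by
  obtain ⟨p, hp⟩ := D.crystal β hβ α hα
  obtain ⟨q, hq⟩ := D.crystal α hα β hβ
  have hαα := aux_inner_self_pos D hα
  have hββ := aux_inner_self_pos D hβ
  have hba : (inner ℝ β α : ℝ) = (inner ℝ α β : ℝ) := real_inner_comm α β
  have hp1 : 1 ≤ p := by
    have : (0:ℝ) < (p:ℝ) := by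
      rw [← hp]; exact div_pos (by linarith) hββ
    exact_mod_cast this
  have hq1 : 1 ≤ q := by
    have : (0:ℝ) < (q:ℝ) := by
      rw [← hq, hba]; exact div_pos (by linarith) hαα
    exact_mod_cast this
  rcases eq_or_lt_of_le hp1 with hp2 | hp2
  · -- p = 1 : s_β(α) = α - β ∈ Φ
    have hm := D.reflect_mem β hβ α hα
    rw [hp, ← hp2] at hm
    simpa using hm
  rcases eq_or_lt_of_le hq1 with hq2 | hq2
  · -- q = 1 : s_α(β) = β - α ∈ Φ, so α - β ∈ Φ
    have hm := D.reflect_mem α hα β hβ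
    rw [hq, ← hq2] at hm
    simp only [Int.cast_one, one_smul] at hm
    have := aux_neg_mem D hm
    rwa [neg_sub] at this
  · -- p ≥ 2, q ≥ 2 : equality in Cauchy-Schwarz
    exfalso
    have hp2' : (2:ℝ) ≤ (p:ℝ) := by exact_mod_cast hp2
    have hq2' : (2:ℝ) ≤ (q:ℝ) := by exact_mod_cast hq2
    have hprod : (4:ℝ) ≤ (p:ℝ) * (q:ℝ) := by nlinarith
    have hpq : (p:ℝ) * (q:ℝ) * ((inner ℝ β β : ℝ) * (inner ℝ α α : ℝ))
        = 4 * ((inner ℝ α β : ℝ) * (inner ℝ α β : ℝ)) := by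
      rw [← hp, ← hq, hba]
      field_simp
      ring
    have hcs := real_inner_mul_inner_self_le α β
    have heq : (inner ℝ α β : ℝ) * (inner ℝ α β : ℝ) = (inner ℝ α α : ℝ) * (inner ℝ β β : ℝ) := by
      nlinarith
    have heqn : (inner ℝ α β : ℝ) = ‖α‖ * ‖β‖ := by
      have h1 : (inner ℝ α β : ℝ) ^ 2 = (‖α‖ * ‖β‖) ^ 2 := by
        rw [real_inner_self_eq_norm_mul_norm, real_inner_self_eq_norm_mul_norm] at heq
        nlinarith
      have h2 : (0:ℝ) ≤ ‖α‖ * ‖β‖ := by positivity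
      nlinarith [sq_nonneg ((inner ℝ α β : ℝ) - ‖α‖ * ‖β‖), sq_nonneg ((inner ℝ α β : ℝ) + ‖α‖ * ‖β‖)]
    have hdep := inner_eq_norm_mul_iff_real.1 heqn
    have hα0 : ‖α‖ ≠ 0 := norm_ne_zero_iff.2 (D.ne_zero α hα)
    have hβeq : β = (‖α‖⁻¹ * ‖β‖) • α := by
      rw [mul_smul, hdep, smul_smul, inv_mul_cancel₀ hα0, one_smul]
    have ht := D.reduced α hα (‖α‖⁻¹ * ‖β‖) (by rw [← hβeq]; exact hβ)
    rcases ht with ht | ht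
    · rw [ht, one_smul] at hβeq; exact hne hβeq.symm
    · have hnn : (0:ℝ) ≤ ‖α‖⁻¹ * ‖β‖ := by positivity
      rw [ht] at hnn; linarith

lemma aux_exists_f : ∃ f : V →ₗ[ℝ] ℝ, ∀ a ∈ D.pos, 1 ≤ f a := by
  classical
  let b := Module.Basis.extend (show LinearIndepOn ℝ id D.S from D.S_indep)
  let f := b.constr ℝ (fun x => if (x : V) ∈ D.S then (1:ℝ) else 0)
  have hfS : ∀ s ∈ D.S, f s = 1 := by
    intro s hs
    have hmem : s ∈ (show LinearIndepOn ℝ id D.S from D.S_indep).extend (Set.subset_univ _) := (show LinearIndepOn ℝ id D.S from D.S_indep).subset_extend _ hs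
    have hb : b ⟨s, hmem⟩ = s := Module.Basis.extend_apply_self (show LinearIndepOn ℝ id D.S from D.S_indep) ⟨s, hmem⟩
    have := b.constr_basis ℝ (fun x => if (x : V) ∈ D.S then (1:ℝ) else 0) ⟨s, hmem⟩
    rw [hb] at this
    exact this.trans (if_pos hs)
  refine ⟨f, fun a ha => ?_⟩
  have key : ∀ x ∈ AddSubmonoid.closure D.S, x = 0 ∨ 1 ≤ f x := by
    intro x hx
    induction hx using AddSubmonoid.closure_induction with
    | mem y hy => exact Or.inr (le_of_eq (hfS y hy).symm)
    | zero => exact Or.inl rfl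
    | add y z _ _ hy hz =>
      rcases hy with hy | hy
      · rcases hz with hz | hz
        · exact Or.inl (by rw [hy, hz, add_zero])
        · exact Or.inr (by rw [map_add, hy, map_zero, zero_add]; exact hz)
      · rcases hz with hz | hz
        · exact Or.inr (by rw [map_add, hz, map_zero, add_zero]; exact hy)
        · exact Or.inr (by rw [map_add]; linarith)
  rcases key a ha.2 with h0 | h1
  · exact absurd h0 (D.ne_zero a ha.1)
  · exact h1

lemma aux_key (k : ℕ) (I : ℕ → Set V) (h : D.IsGeomChain k I)
    (f : V →ₗ[ℝ] ℝ) (hf : ∀ a ∈ D.pos, 1 ≤ f a) :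
    ∀ m : ℕ, ∀ a : Fin m → V, ∀ r : Fin m → ℕ,
      (∀ i, 1 ≤ r i ∧ r i ≤ k ∧ a i ∈ I (r i)) →
      (∑ i, a i) ∈ D.pos → (∑ i, r i) ≤ k → (∑ i, a i) ∈ I (∑ i, r i) := by
  intro m
  induction m with
  | zero =>
    intro a r _ hpos _
    simp only [Finset.univ_eq_empty, Finset.sum_empty] at hpos ⊢
    exact absurd rfl (D.ne_zero 0 hpos.1)
  | succ n ih =>
    intro a r hcond hpos hk
    have haj : ∀ j, a j ∈ D.pos := fun j =>
      (h.ideal (r j) (hcond j).1 (hcond j).2.1).1 (hcond j).2.2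
    rcases n with _ | n'
    · simpa [Fin.sum_univ_one] using (hcond 0).2.2
    · set α := ∑ i, a i with hαdef
      have hαΦ : α ∈ D.Φ := hpos.1
      have hαα : 0 < (inner ℝ α α : ℝ) := aux_inner_self_pos D hαΦ
      have hsum_inner : (inner ℝ α α : ℝ) = ∑ i, (inner ℝ α (a i) : ℝ) := by
        rw [hαdef, inner_sum]
      obtain ⟨i, hi⟩ : ∃ i, 0 < (inner ℝ α (a i) : ℝ) := by
        by_contra hc
        push_neg at hc
        have : (inner ℝ α α : ℝ) ≤ 0 := by
          rw [hsum_inner]; exact Finset.sum_nonpos fun j _ => hc j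
        linarith
      have hsplit_a : α = a i + ∑ j, a (i.succAbove j) := Fin.sum_univ_succAbove a i
      have hsplit_r : (∑ j, r j) = r i + ∑ j, r (i.succAbove j) := Fin.sum_univ_succAbove r i
      set β := ∑ j : Fin (n' + 1), a (i.succAbove j) with hβdef
      have hβS : β ∈ AddSubmonoid.closure D.S :=
        AddSubmonoid.sum_mem _ fun j _ => (haj _).2
      have hfβ : (1:ℝ) ≤ f β := by
        rw [hβdef, map_sum]
        calc (1:ℝ) ≤ ∑ _j : Fin (n' + 1), (1:ℝ) := by
              simp
          _ ≤ ∑ j, f (a (i.succAbove j)) :=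
              Finset.sum_le_sum fun j _ => hf _ (haj _)
      have hβ0 : β ≠ 0 := by
        intro h0
        rw [h0, map_zero] at hfβ
        linarith
      have hne : α ≠ a i := by
        intro e
        apply hβ0
        have h0 : a i + β = a i + 0 := by rw [add_zero, ← hsplit_a]; exact e
        exact add_left_cancel h0
      have hβeq : β = α - a i := by rw [hsplit_a]; abel
      have hβΦ : β ∈ D.Φ := by
        rw [hβeq]
        exact aux_sub_mem D hαΦ (haj i).1 hne hi
      have hβpos : β ∈ D.pos := ⟨hβΦ, hβS⟩
      have hrle : r i + (∑ j, r (i.succAbove j)) ≤ k := hsplit_r ▸ hk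
      have ihβ : β ∈ I (∑ j, r (i.succAbove j)) :=
        ih (fun j => a (i.succAbove j)) (fun j => r (i.succAbove j))
          (fun j => hcond _) hβpos (le_trans (Nat.le_add_left _ _) hrle)
      have hmem : α ∈ (I (r i) + I (∑ j, r (i.succAbove j))) ∩ D.pos := by
        refine ⟨?_, hpos⟩
        rw [hsplit_a]
        exact Set.add_mem_add (hcond i).2.2 ihβ
      have := h.geomI (r i) (∑ j, r (i.succAbove j)) hrle hmem
      rwa [hsplit_r]

end Aux



/-- For a geometric chain of ideals `𝓘` and `α ∈ Φ⁺` with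
`r_α(𝓘) = r ≤ k`, one has `α ∈ I_r`. -/
theorem statement5 {V : Type*} [NormedAddCommGroup V] [InnerProductSpace ℝ V]
    (D : RootSystemData V) (k : ℕ) (I : ℕ → Set V) (h : D.IsGeomChain k I)
    (α : V) (hα : α ∈ D.pos) (r : ℕ) (hr : IsLeast (D.rVals k I α) r) (hrk : r ≤ k) :
    α ∈ I r := by
  obtain ⟨m, a, rr, hcond, hsum, hN⟩ := hr.1
  obtain ⟨f, hf⟩ := aux_exists_f D
  have := aux_key D k I h f hf m a rr hcond (hsum ▸ hα) (hN ▸ hrk)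
  rwa [hsum, hN] at this
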